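/- The volume of the intersection of the box with the asymmetrically scaled $\ell_1$-ball satisfies $\mathrm{vol}(\mathcal{D} \cap \widetilde{\mathcal{B}}_1^t(\bar{x})) = \mathrm{vol}(\mathcal{D}) \cdot \frac{t^k}{k!} \sum_{r=0}^{t-1} (-1)^r \binom{k}{r} (1 - r/t)^k$. -/

import Mathlib

open scoped ENNReal

noncomputable def deltaE {k : ℕ} (a b x : Fin k → ℝ) (i : Fin k) (y : Fin k → ℝ) : ℝ≥0∞ :=
  if y i = x i then 0
  else if x i < y i then (if b i = x i then ⊤ else ENNReal.ofReal ((y i - x i) / (b i - x i)))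
  else (if a i = x i then ⊤ else ENNReal.ofReal ((y i - x i) / (a i - x i)))

open MeasureTheory Set

noncomputable def tentF (a b x y : ℝ) : ℝ :=
  if x < y then (y - x) / (b - x) else (x - y) / (x - a)

lemma measurable_tentF (a b x : ℝ) : Measurable (tentF a b x) := by
  unfold tentF
  exact Measurable.ite (measurableSet_lt measurable_const measurable_id)
    (by fun_prop) (by fun_prop)

lemma lintegral_affine (c d : ℝ) (hc : c ≠ 0) (f : ℝ → ℝ≥0∞) (hf : Measurable f)
    (S : Set ℝ) (hS : MeasurableSet S) :
    ∫⁻ y in S, f y = ENNReal.ofReal |c| * ∫⁻ u in (fun u => d + c * u) ⁻¹' S, f (d + c * u) := by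
  have hφ : Measurable (fun u : ℝ => d + c * u) := by fun_prop
  have hmap : Measure.map (fun u : ℝ => d + c * u) volume
      = ENNReal.ofReal |c⁻¹| • volume := by
    have h1 : (fun u : ℝ => d + c * u) = (fun y : ℝ => d + y) ∘ (fun u : ℝ => c * u) := rfl
    rw [h1, ← Measure.map_map (measurable_const_add d) (measurable_const_mul c),
      Real.map_volume_mul_left hc, Measure.map_smul, Measure.IsAddLeftInvariant.map_add_left_eq_self]
  have key : ∫⁻ u in (fun u => d + c * u) ⁻¹' S, f (d + c * u)
      = ENNReal.ofReal |c⁻¹| * ∫⁻ y in S, f y := by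
    rw [← lintegral_indicator (hφ hS) _, ← lintegral_indicator hS _]
    have h2 : ((fun u => d + c * u) ⁻¹' S).indicator (fun u => f (d + c * u))
        = fun u => S.indicator f (d + c * u) := by
      ext u
      by_cases h : d + c * u ∈ S <;>
        simp [Set.indicator, h, Set.mem_preimage]
    rw [h2, ← lintegral_map (hf.indicator hS) hφ, hmap, lintegral_smul_measure, smul_eq_mul]
  rw [key, ← mul_assoc, ← ENNReal.ofReal_mul (abs_nonneg _), ← abs_mul,
    mul_inv_cancel₀ hc, abs_one, ENNReal.ofReal_one, one_mul]

lemma key1d {a0 b0 x0 : ℝ} (hab : a0 < b0) (h1 : a0 ≤ x0) (h2 : x0 ≤ b0)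
    (Ψ : ℝ → ℝ≥0∞) (hΨ : Measurable Ψ) :
    ∫⁻ y in Icc a0 b0, Ψ (tentF a0 b0 x0 y) =
      ENNReal.ofReal (b0 - a0) * ∫⁻ u in Icc (0:ℝ) 1, Ψ u := by
  have hsplit : Icc a0 b0 = Ico a0 x0 ∪ Icc x0 b0 := (Ico_union_Icc_eq_Icc h1 h2).symm
  have hdisj : Disjoint (Ico a0 x0) (Icc x0 b0) := by
    rw [Set.disjoint_left]
    rintro y ⟨_, hy2⟩ ⟨hy3, _⟩
    exact absurd hy3 (not_le.mpr hy2)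
  have hmeas : Measurable fun y => Ψ (tentF a0 b0 x0 y) :=
    hΨ.comp (measurable_tentF a0 b0 x0)
  rw [hsplit, lintegral_union measurableSet_Icc hdisj]
  have piece2 : ∫⁻ y in Icc x0 b0, Ψ (tentF a0 b0 x0 y)
      = ENNReal.ofReal (b0 - x0) * ∫⁻ u in Icc (0:ℝ) 1, Ψ u := by
    rcases eq_or_lt_of_le h2 with heq | hlt
    · rw [heq, Set.Icc_self, show ((volume : Measure ℝ).restrict {b0}) = 0 from
        Measure.restrict_eq_zero.mpr (measure_singleton b0), lintegral_zero_measure,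
        show b0 - b0 = 0 by ring, ENNReal.ofReal_zero, zero_mul]
    · have hc : b0 - x0 ≠ 0 := ne_of_gt (by linarith)
      have step1 : ∫⁻ y in Icc x0 b0, Ψ (tentF a0 b0 x0 y)
          = ∫⁻ y in Icc x0 b0, Ψ ((y - x0) / (b0 - x0)) := by
        refine setLIntegral_congr_fun measurableSet_Icc (fun y hy => ?_)
        rcases eq_or_lt_of_le hy.1 with h | h
        · simp [tentF, ← h]
        · simp [tentF, h]
      rw [step1, lintegral_affine (b0 - x0) x0 hc
        (fun y => Ψ ((y - x0) / (b0 - x0))) (hΨ.comp (by fun_prop)) _ measurableSet_Icc]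
      have hpre : (fun u => x0 + (b0 - x0) * u) ⁻¹' Icc x0 b0 = Icc (0:ℝ) 1 := by
        ext u
        simp only [Set.mem_preimage, Set.mem_Icc]
        constructor
        · rintro ⟨hu1, hu2⟩
          constructor <;> nlinarith
        · rintro ⟨hu1, hu2⟩
          constructor <;> nlinarith
      have harg : ∀ u : ℝ, (x0 + (b0 - x0) * u - x0) / (b0 - x0) = u := fun u => by
        field_simp
        ring
      simp only [hpre, harg, abs_of_pos (show (0:ℝ) < b0 - x0 by linarith)]
  have piece1 : ∫⁻ y in Ico a0 x0, Ψ (tentF a0 b0 x0 y)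
      = ENNReal.ofReal (x0 - a0) * ∫⁻ u in Icc (0:ℝ) 1, Ψ u := by
    rcases eq_or_lt_of_le h1 with heq | hlt
    · rw [← heq, Set.Ico_self, Measure.restrict_empty, lintegral_zero_measure,
        show a0 - a0 = 0 by ring, ENNReal.ofReal_zero, zero_mul]
    · have hc : a0 - x0 ≠ 0 := ne_of_lt (by linarith)
      have step1 : ∫⁻ y in Ico a0 x0, Ψ (tentF a0 b0 x0 y)
          = ∫⁻ y in Ico a0 x0, Ψ ((x0 - y) / (x0 - a0)) := by
        refine setLIntegral_congr_fun measurableSet_Ico (fun y hy => ?_)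
        have : ¬ x0 < y := not_lt.mpr hy.2.le
        simp [tentF, this]
      rw [step1, lintegral_affine (a0 - x0) x0 hc
        (fun y => Ψ ((x0 - y) / (x0 - a0))) (hΨ.comp (by fun_prop)) _ measurableSet_Ico]
      have hpre : (fun u => x0 + (a0 - x0) * u) ⁻¹' Ico a0 x0 = Ioc (0:ℝ) 1 := by
        ext u
        simp only [Set.mem_preimage, Set.mem_Ico, Set.mem_Ioc]
        constructor
        · rintro ⟨hu1, hu2⟩
          constructor <;> nlinarith
        · rintro ⟨hu1, hu2⟩
          constructor <;> nlinarith
      have harg : ∀ u : ℝ, (x0 - (x0 + (a0 - x0) * u)) / (x0 - a0) = u := fun u => by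
        rw [show x0 - (x0 + (a0 - x0) * u) = (x0 - a0) * u by ring]
        exact mul_div_cancel_left₀ u (sub_ne_zero.mpr hlt.ne')
      have hIoc : ∫⁻ u in Ioc (0:ℝ) 1, Ψ u = ∫⁻ u in Icc (0:ℝ) 1, Ψ u := by
        rw [Measure.restrict_congr_set Ioc_ae_eq_Icc]
      simp only [hpre, harg, abs_of_neg (show a0 - x0 < 0 by linarith), hIoc, neg_sub]
  rw [piece1, piece2, ← add_mul, ← ENNReal.ofReal_add (by linarith) (by linarith),
    show x0 - a0 + (b0 - x0) = b0 - a0 by ring]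

lemma boxset_measurable {n : ℕ} (a b : Fin n → ℝ) (f : Fin n → ℝ → ℝ)
    (hf : ∀ i, Measurable (f i)) (r : ℝ) :
    MeasurableSet {y : Fin n → ℝ | (∀ i, y i ∈ Icc (a i) (b i)) ∧ ∑ i, f i (y i) ≤ r} := by
  have h1 : MeasurableSet {y : Fin n → ℝ | ∀ i, y i ∈ Icc (a i) (b i)} := by
    have heq : {y : Fin n → ℝ | ∀ i, y i ∈ Icc (a i) (b i)}
        = Set.pi Set.univ (fun i => Icc (a i) (b i)) := by
      ext y
      simp only [Set.mem_setOf_eq, Set.mem_pi, Set.mem_univ, true_implies]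
    rw [heq]
    exact MeasurableSet.univ_pi fun i => measurableSet_Icc
  have h2 : MeasurableSet {y : Fin n → ℝ | ∑ i, f i (y i) ≤ r} := by
    have hsum : Measurable fun y : Fin n → ℝ => ∑ i, f i (y i) :=
      Finset.measurable_sum _ fun i _ => (hf i).comp (measurable_pi_apply i)
    exact measurableSet_le hsum measurable_const
  exact h1.inter h2

lemma decomp (n : ℕ) (a b : Fin (n + 1) → ℝ) (f : Fin (n + 1) → ℝ → ℝ)
    (hf : ∀ i, Measurable (f i)) (r : ℝ) :
    volume {y : Fin (n + 1) → ℝ | (∀ i, y i ∈ Icc (a i) (b i)) ∧ ∑ i, f i (y i) ≤ r} =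
    ∫⁻ u in Icc (a 0) (b 0),
      volume {z : Fin n → ℝ | (∀ i, z i ∈ Icc (a i.succ) (b i.succ)) ∧
        ∑ i, f i.succ (z i) ≤ r - f 0 u} := by
  set A := {y : Fin (n + 1) → ℝ | (∀ i, y i ∈ Icc (a i) (b i)) ∧ ∑ i, f i (y i) ≤ r} with hA
  have hAm : MeasurableSet A := boxset_measurable a b f hf r
  set e := MeasurableEquiv.piFinSuccAbove (fun _ : Fin (n + 1) => ℝ) 0 with he
  have hMP : MeasurePreserving e.symm
      ((volume : Measure ℝ).prod (volume : Measure (Fin n → ℝ)))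
      (volume : Measure (Fin (n + 1) → ℝ)) :=
    (measurePreserving_piFinSuccAbove (fun _ : Fin (n + 1) => (volume : Measure ℝ)) 0).symm _
  have h2 : volume A = ((volume : Measure ℝ).prod (volume : Measure (Fin n → ℝ)))
      (e.symm ⁻¹' A) := (hMP.measure_preimage hAm.nullMeasurableSet).symm
  rw [h2, Measure.prod_apply (e.symm.measurable hAm)]
  have hslice : ∀ u : ℝ, (Prod.mk u ⁻¹' (e.symm ⁻¹' A))
      = if u ∈ Icc (a 0) (b 0) then
          {z : Fin n → ℝ | (∀ i, z i ∈ Icc (a i.succ) (b i.succ)) ∧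
            ∑ i, f i.succ (z i) ≤ r - f 0 u} else ∅ := by
    intro u
    ext z
    have hev : e.symm (u, z) = Fin.insertNth (α := fun _ => ℝ) 0 u z := rfl
    have hval0 : Fin.insertNth (α := fun _ => ℝ) 0 u z 0 = u := by simp
    have hvals : ∀ j : Fin n, Fin.insertNth (α := fun _ => ℝ) 0 u z j.succ = z j := by
      intro j
      rw [show j.succ = (0 : Fin (n + 1)).succAbove j from (by rw [Fin.succAbove_zero])]
      exact Fin.insertNth_apply_succAbove (α := fun _ => ℝ) 0 u z j
    have hmem : e.symm (u, z) ∈ A ↔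
        ((u ∈ Icc (a 0) (b 0) ∧ ∀ i : Fin n, z i ∈ Icc (a i.succ) (b i.succ)) ∧
          f 0 u + ∑ i : Fin n, f i.succ (z i) ≤ r) := by
      rw [hA]
      simp only [Set.mem_setOf_eq, hev, Fin.forall_fin_succ, Fin.sum_univ_succ, hval0, hvals]
    by_cases hu : u ∈ Icc (a 0) (b 0)
    · simp only [Set.mem_preimage, hmem, hu, if_true, Set.mem_setOf_eq, true_and]
      constructor
      · rintro ⟨h1', h2'⟩; exact ⟨h1', by linarith⟩
      · rintro ⟨h1', h2'⟩; exact ⟨h1', by linarith⟩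
    · simp only [Set.mem_preimage, hmem, hu, if_false, Set.mem_empty_iff_false, iff_false,
        false_and, not_false_eq_true]
  calc ∫⁻ u, volume (Prod.mk u ⁻¹' (e.symm ⁻¹' A))
      = ∫⁻ u, (Icc (a 0) (b 0)).indicator (fun u =>
          volume {z : Fin n → ℝ | (∀ i, z i ∈ Icc (a i.succ) (b i.succ)) ∧
            ∑ i, f i.succ (z i) ≤ r - f 0 u}) u := by
        apply lintegral_congr
        intro u
        rw [hslice u]
        by_cases hu : u ∈ Icc (a 0) (b 0) <;> simp [hu]
    _ = _ := lintegral_indicator measurableSet_Icc _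

noncomputable def MM (n : ℕ) (r : ℝ) : ℝ≥0∞ :=
  volume {u : Fin n → ℝ | (∀ i, u i ∈ Icc (0:ℝ) 1) ∧ ∑ i, u i ≤ r}

lemma MM_mono (n : ℕ) : Monotone (MM n) := by
  intro r r' h
  exact measure_mono fun u hu => ⟨hu.1, le_trans hu.2 h⟩

lemma MM_measurable (n : ℕ) : Measurable (MM n) := (MM_mono n).measurable

lemma MM_succ (n : ℕ) (r : ℝ) :
    MM (n + 1) r = ∫⁻ u in Icc (0:ℝ) 1, MM n (r - u) := by
  have h := decomp n (fun _ => (0:ℝ)) (fun _ => (1:ℝ)) (fun _ => id)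
    (fun _ => measurable_id) r
  simpa [MM] using h

lemma boxL : ∀ (n : ℕ) (a b x : Fin n → ℝ), (∀ i, a i < b i) →
    (∀ i, a i ≤ x i ∧ x i ≤ b i) → ∀ r : ℝ,
    volume {y : Fin n → ℝ | (∀ i, y i ∈ Icc (a i) (b i)) ∧
        ∑ i, tentF (a i) (b i) (x i) (y i) ≤ r}
      = ENNReal.ofReal (∏ i, (b i - a i)) * MM n r := by
  intro n
  induction n with
  | zero =>
    intro a b x hab hx r
    have hset : {y : Fin 0 → ℝ | (∀ i, y i ∈ Icc (a i) (b i)) ∧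
        ∑ i, tentF (a i) (b i) (x i) (y i) ≤ r}
        = {u : Fin 0 → ℝ | (∀ i, u i ∈ Icc (0:ℝ) 1) ∧ ∑ i, u i ≤ r} := by
      ext y
      simp
    rw [hset]
    simp [MM]
  | succ n ih =>
    intro a b x hab hx r
    have hdec := decomp n a b (fun i => tentF (a i) (b i) (x i))
      (fun i => measurable_tentF _ _ _) r
    rw [hdec]
    have hih : ∀ u : ℝ,
        volume {z : Fin n → ℝ | (∀ i, z i ∈ Icc (a i.succ) (b i.succ)) ∧
          ∑ i, tentF (a i.succ) (b i.succ) (x i.succ) (z i) ≤ r - tentF (a 0) (b 0) (x 0) u}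
        = ENNReal.ofReal (∏ i : Fin n, (b i.succ - a i.succ)) *
            MM n (r - tentF (a 0) (b 0) (x 0) u) :=
      fun u => ih (fun i => a i.succ) (fun i => b i.succ) (fun i => x i.succ)
        (fun i => hab i.succ) (fun i => hx i.succ) _
    calc ∫⁻ u in Icc (a 0) (b 0),
        volume {z : Fin n → ℝ | (∀ i, z i ∈ Icc (a i.succ) (b i.succ)) ∧
          ∑ i, tentF (a i.succ) (b i.succ) (x i.succ) (z i) ≤ r - tentF (a 0) (b 0) (x 0) u}
        = ∫⁻ u in Icc (a 0) (b 0), ENNReal.ofReal (∏ i : Fin n, (b i.succ - a i.succ)) *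
            MM n (r - tentF (a 0) (b 0) (x 0) u) := lintegral_congr hih
      _ = ENNReal.ofReal (∏ i : Fin n, (b i.succ - a i.succ)) *
            ∫⁻ u in Icc (a 0) (b 0), MM n (r - tentF (a 0) (b 0) (x 0) u) := by
          apply lintegral_const_mul
          exact (MM_measurable n).comp
            ((measurable_const.sub measurable_id).comp (measurable_tentF _ _ _))
      _ = ENNReal.ofReal (∏ i : Fin n, (b i.succ - a i.succ)) *
            (ENNReal.ofReal (b 0 - a 0) * ∫⁻ v in Icc (0:ℝ) 1, MM n (r - v)) := by
          rw [key1d (hab 0) (hx 0).1 (hx 0).2 (fun v => MM n (r - v))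
            ((MM_measurable n).comp (measurable_const.sub measurable_id))]
      _ = ENNReal.ofReal (∏ i : Fin (n + 1), (b i - a i)) * MM (n + 1) r := by
          rw [MM_succ, Fin.prod_univ_succ, ← mul_assoc, mul_comm
            (ENNReal.ofReal (∏ i : Fin n, (b i.succ - a i.succ))) (ENNReal.ofReal (b 0 - a 0)),
            ← ENNReal.ofReal_mul (by linarith [hab 0] : (0:ℝ) ≤ b 0 - a 0)]

lemma hasDerivAt_maxpow (n : ℕ) (hn : 1 ≤ n) (v : ℝ) :
    HasDerivAt (fun w : ℝ => max w 0 ^ (n + 1)) ((n + 1) * max v 0 ^ n) v := by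
  rcases lt_trichotomy v 0 with hv | hv | hv
  · have hev : (fun w : ℝ => max w 0 ^ (n + 1)) =ᶠ[nhds v] fun _ => (0:ℝ) ^ (n + 1) := by
      filter_upwards [eventually_lt_nhds hv] with w hw
      rw [max_eq_right hw.le]
    have : HasDerivAt (fun _ : ℝ => (0:ℝ) ^ (n + 1)) 0 v := hasDerivAt_const v _
    have h2 := this.congr_of_eventuallyEq hev
    refine h2.congr_deriv ?_
    rw [max_eq_right hv.le, zero_pow (by omega : n ≠ 0), mul_zero]
  · subst hv
    rw [hasDerivAt_iff_isLittleO]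
    simp only [max_self, zero_pow (by omega : n ≠ 0), mul_zero, zero_smul, sub_zero,
      max_eq_right le_rfl, ne_eq, zero_pow (by omega : n + 1 ≠ 0), smul_zero]
    have hO : (fun w : ℝ => max w 0 ^ (n + 1)) =O[nhds 0] fun w => w ^ (n + 1) := by
      apply Asymptotics.IsBigO.of_bound 1
      filter_upwards with w
      rw [one_mul]
      rcases le_total w 0 with h | h
      · rw [max_eq_right h]
        simp [zero_pow (by omega : n + 1 ≠ 0)]
      · rw [max_eq_left h]
    have hlo : (fun w : ℝ => w ^ (n + 1)) =o[nhds 0] fun w : ℝ => w := by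
      have := Asymptotics.isLittleO_pow_pow (𝕜 := ℝ) (show 1 < n + 1 by omega)
      simpa using this
    exact hO.trans_isLittleO hlo
  · have hev : (fun w : ℝ => max w 0 ^ (n + 1)) =ᶠ[nhds v] fun w => w ^ (n + 1) := by
      filter_upwards [eventually_gt_nhds hv] with w hw
      rw [max_eq_left hw.le]
    have h2 := (hasDerivAt_pow (n + 1) v).congr_of_eventuallyEq hev
    refine h2.congr_deriv ?_
    rw [max_eq_left hv.le]
    push_cast
    ring

lemma integral_maxpow (n : ℕ) (hn : 1 ≤ n) (c : ℝ) :
    ∫ u in (0:ℝ)..1, max (c - u) 0 ^ n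
      = (max c 0 ^ (n + 1) - max (c - 1) 0 ^ (n + 1)) / (n + 1) := by
  have key : ∀ v ∈ uIcc (0:ℝ) 1, HasDerivAt
      (fun u : ℝ => -(max (c - u) 0 ^ (n + 1)) / (n + 1)) (max (c - v) 0 ^ n) v := by
    intro v _
    have h1 : HasDerivAt (fun u : ℝ => c - u) (-1) v := by
      simpa using (hasDerivAt_id v).const_sub c
    have h2 := (hasDerivAt_maxpow n hn (c - v)).comp v h1
    have h3 := (h2.neg).div_const ((n : ℝ) + 1)
    refine h3.congr_deriv ?_
    field_simp
  have hcont : IntervalIntegrable (fun v : ℝ => max (c - v) 0 ^ n) volume 0 1 := by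
    apply Continuous.intervalIntegrable
    exact ((continuous_const.sub continuous_id).max continuous_const).pow n
  rw [intervalIntegral.integral_eq_sub_of_hasDerivAt key hcont]
  simp only [sub_zero]
  ring

noncomputable def gP (n : ℕ) (r : ℝ) : ℝ :=
  (∑ j ∈ Finset.range (n + 1), (-1:ℝ)^j * (n.choose j) * max (r - j) 0 ^ n) / n.factorial

lemma continuous_gP (n : ℕ) : Continuous (gP n) := by
  unfold gP
  apply Continuous.div_const
  apply continuous_finset_sum
  intro j _
  exact continuous_const.mul (((continuous_id.sub continuous_const).max continuous_const).pow n)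

lemma comb (n : ℕ) (P : ℕ → ℝ) :
    ∑ j ∈ Finset.range (n + 1), (-1:ℝ)^j * (n.choose j) * (P j - P (j+1))
      = ∑ j ∈ Finset.range (n + 2), (-1:ℝ)^j * ((n+1).choose j) * P j := by
  have hA : ∑ j ∈ Finset.range (n+1), (-1:ℝ)^j * (n.choose j) * P j
      = ∑ j ∈ Finset.range (n+2), (-1:ℝ)^j * (n.choose j) * P j := by
    rw [Finset.sum_range_succ (fun j => (-1:ℝ)^j * (n.choose j) * P j) (n+1)]
    simp [Nat.choose_succ_self]
  have hkey : ∑ j ∈ Finset.range (n+2), ((-1:ℝ)^j * ((n+1).choose j) * P j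
        - (-1:ℝ)^j * (n.choose j) * P j)
      = - ∑ j ∈ Finset.range (n+1), (-1:ℝ)^j * (n.choose j) * P (j+1) := by
    rw [Finset.sum_range_succ' (fun j => (-1:ℝ)^j * ((n+1).choose j) * P j
      - (-1:ℝ)^j * (n.choose j) * P j) (n+1)]
    have hterm : ∀ j, ((-1:ℝ)^(j+1) * ((n+1).choose (j+1)) * P (j+1)
          - (-1:ℝ)^(j+1) * (n.choose (j+1)) * P (j+1))
        = -((-1:ℝ)^j * (n.choose j) * P (j+1)) := by
      intro j
      have h1 : (((n+1).choose (j+1) : ℝ)) = (n.choose j : ℝ) + (n.choose (j+1) : ℝ) := by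
        exact_mod_cast Nat.choose_succ_succ n j
      rw [h1]; ring
    simp only [hterm]
    rw [← Finset.sum_neg_distrib]
    simp
  have hsplit : ∑ j ∈ Finset.range (n + 1), (-1:ℝ)^j * (n.choose j) * (P j - P (j+1))
      = (∑ j ∈ Finset.range (n+1), (-1:ℝ)^j * (n.choose j) * P j)
        - ∑ j ∈ Finset.range (n+1), (-1:ℝ)^j * (n.choose j) * P (j+1) := by
    rw [← Finset.sum_sub_distrib]
    congr 1
    ext j
    ring
  rw [Finset.sum_sub_distrib] at hkey
  rw [hsplit, hA]
  linarith [hkey]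

lemma integral_gP (n : ℕ) (hn : 1 ≤ n) (r : ℝ) :
    ∫ u in Icc (0:ℝ) 1, gP n (r - u) = gP (n + 1) r := by
  rw [MeasureTheory.integral_Icc_eq_integral_Ioc,
    ← intervalIntegral.integral_of_le (by norm_num : (0:ℝ) ≤ 1)]
  unfold gP
  rw [intervalIntegral.integral_div]
  rw [intervalIntegral.integral_finset_sum (fun j _ => by
    apply Continuous.intervalIntegrable
    exact continuous_const.mul
      ((((continuous_const.sub continuous_id).sub continuous_const).max continuous_const).pow n))]
  have hterm : ∀ j ∈ Finset.range (n + 1),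
      ∫ u in (0:ℝ)..1, (-1:ℝ)^j * (n.choose j) * max (r - u - j) 0 ^ n
        = (-1:ℝ)^j * (n.choose j) *
          ((max (r - j) 0 ^ (n+1) - max (r - (j+1:ℕ)) 0 ^ (n+1)) / (n+1)) := by
    intro j _
    rw [intervalIntegral.integral_const_mul]
    congr 1
    have heq : (fun u : ℝ => max (r - u - j) 0 ^ n) = fun u => max ((r - j) - u) 0 ^ n := by
      funext u
      congr 2
      ring
    rw [heq, integral_maxpow n hn (r - j)]
    congr 3
    push_cast
    ring
  rw [Finset.sum_congr rfl hterm]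
  have hfac : ((n+1).factorial : ℝ) = (n+1) * (n.factorial : ℝ) := by
    rw [Nat.factorial_succ]
    push_cast
    ring
  rw [hfac]
  have hcomb := comb n (fun j => max (r - j) 0 ^ (n+1))
  have hrw : ∑ j ∈ Finset.range (n + 1), (-1:ℝ)^j * (n.choose j) *
        ((max (r - j) 0 ^ (n+1) - max (r - (j+1:ℕ)) 0 ^ (n+1)) / (n+1))
      = (∑ j ∈ Finset.range (n + 1), (-1:ℝ)^j * (n.choose j) *
        (max (r - j) 0 ^ (n+1) - max (r - (j+1:ℕ)) 0 ^ (n+1))) / (n+1) := by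
    rw [Finset.sum_div]
    congr 1
    ext j
    ring
  rw [hrw, hcomb]
  field_simp

lemma MM_one (r : ℝ) : MM 1 r = ENNReal.ofReal (min 1 r) := by
  have hAm : MeasurableSet {u : Fin 1 → ℝ | (∀ i, u i ∈ Icc (0:ℝ) 1) ∧ ∑ i, u i ≤ r} :=
    boxset_measurable (fun _ => (0:ℝ)) (fun _ => (1:ℝ)) (fun _ => id) (fun _ => measurable_id) r
  have hMP : MeasurePreserving (MeasurableEquiv.funUnique (Fin 1) ℝ).symm
      (volume : Measure ℝ) (volume : Measure (Fin 1 → ℝ)) :=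
    (volume_preserving_funUnique (Fin 1) ℝ).symm _
  have h2 : MM 1 r = volume ((MeasurableEquiv.funUnique (Fin 1) ℝ).symm ⁻¹'
      {u : Fin 1 → ℝ | (∀ i, u i ∈ Icc (0:ℝ) 1) ∧ ∑ i, u i ≤ r}) :=
    (hMP.measure_preimage hAm.nullMeasurableSet).symm
  rw [MM] at *
  rw [h2]
  have hset : (MeasurableEquiv.funUnique (Fin 1) ℝ).symm ⁻¹'
      {u : Fin 1 → ℝ | (∀ i, u i ∈ Icc (0:ℝ) 1) ∧ ∑ i, u i ≤ r}
      = Icc (0:ℝ) (min 1 r) := by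
    ext v
    simp only [Set.mem_preimage, Set.mem_setOf_eq, Set.mem_Icc, le_min_iff,
      MeasurableEquiv.funUnique_symm_apply]
    constructor
    · rintro ⟨hbox, hsum⟩
      have h0 := hbox 0
      refine ⟨h0.1, h0.2, ?_⟩
      simpa using hsum
    · rintro ⟨h0, h1', h2'⟩
      refine ⟨fun i => ⟨h0, h1'⟩, ?_⟩
      simpa using h2'
  rw [hset, Real.volume_Icc, sub_zero]

lemma MM_eq_gP : ∀ n : ℕ, 1 ≤ n → ∀ r : ℝ, MM n r = ENNReal.ofReal (gP n r) ∧ 0 ≤ gP n r := by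
  intro n
  induction n with
  | zero => intro h; omega
  | succ n ih =>
    intro _ r
    rcases Nat.eq_zero_or_pos n with hn0 | hn1
    · subst hn0
      have hg : gP 1 r = max r 0 - max (r - 1) 0 := by
        unfold gP
        rw [Finset.sum_range_succ, Finset.sum_range_one]
        norm_num
        ring
      constructor
      · rw [MM_one, hg]
        rcases le_total r 0 with h | h
        · rw [max_eq_right h, max_eq_right (by linarith : r - 1 ≤ 0), sub_zero,
            ENNReal.ofReal_eq_zero.mpr ((min_le_right 1 r).trans h), ENNReal.ofReal_zero]
        · rcases le_total r 1 with h' | h'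
          · rw [max_eq_left h, max_eq_right (by linarith), min_eq_right h', sub_zero]
          · rw [max_eq_left h, max_eq_left (by linarith), min_eq_left h']
            congr 1
            ring
      · rw [hg]
        rcases le_total r 0 with h | h
        · rw [max_eq_right h, max_eq_right (by linarith)]
          norm_num
        · rcases le_total r 1 with h' | h'
          · rw [max_eq_left h, max_eq_right (by linarith)]
            linarith
          · rw [max_eq_left h, max_eq_left (by linarith)]
            linarith
    · have step1 : MM (n + 1) r = ∫⁻ u in Icc (0:ℝ) 1, ENNReal.ofReal (gP n (r - u)) := by
        rw [MM_succ]
        exact lintegral_congr fun u => (ih hn1 (r - u)).1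
      have hint : IntegrableOn (fun u : ℝ => gP n (r - u)) (Icc (0:ℝ) 1) volume :=
        ((continuous_gP n).comp (continuous_const.sub continuous_id)).integrableOn_Icc
      have hnonneg : 0 ≤ᵐ[volume.restrict (Icc (0:ℝ) 1)] fun u : ℝ => gP n (r - u) :=
        ae_of_all _ fun u => (ih hn1 (r - u)).2
      have step2 : ∫⁻ u in Icc (0:ℝ) 1, ENNReal.ofReal (gP n (r - u))
          = ENNReal.ofReal (∫ u in Icc (0:ℝ) 1, gP n (r - u)) :=
        (MeasureTheory.ofReal_integral_eq_lintegral_ofReal hint hnonneg).symm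
      have step3 := integral_gP n hn1 r
      refine ⟨by rw [step1, step2, step3], ?_⟩
      rw [← step3]
      exact MeasureTheory.integral_nonneg fun u => (ih hn1 (r - u)).2

lemma tentF_nonneg {a b x y : ℝ} (hab : a < b) (hx1 : a ≤ x) (hx2 : x ≤ b)
    (hy1 : a ≤ y) (hy2 : y ≤ b) : 0 ≤ tentF a b x y := by
  unfold tentF
  split_ifs with h
  · apply div_nonneg <;> linarith
  · apply div_nonneg <;> linarith

lemma deltaE_eq {k : ℕ} (a b x : Fin k → ℝ) (i : Fin k) (y : Fin k → ℝ)
    (hab : a i < b i) (hx : a i ≤ x i ∧ x i ≤ b i) (hy : y i ∈ Icc (a i) (b i)) :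
    deltaE a b x i y = ENNReal.ofReal (tentF (a i) (b i) (x i) (y i)) := by
  obtain ⟨hy1, hy2⟩ := hy
  unfold deltaE tentF
  rcases lt_trichotomy (y i) (x i) with h | h | h
  · rw [if_neg (ne_of_lt h), if_neg (not_lt.mpr h.le), if_neg (by linarith : ¬ a i = x i),
      if_neg (not_lt.mpr h.le)]
    congr 1
    rw [show x i - y i = -(y i - x i) by ring, show x i - a i = -(a i - x i) by ring,
      neg_div_neg_eq]
  · rw [if_pos h, if_neg (by rw [h]; exact lt_irrefl _), h, sub_self, zero_div,
      ENNReal.ofReal_zero]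
  · rw [if_neg (ne_of_gt h), if_pos h, if_neg (by linarith : ¬ b i = x i), if_pos h]

lemma gP_nat (k t : ℕ) (hk : 1 ≤ k) (ht : 1 ≤ t) (htk : t ≤ k) :
    gP k (t : ℝ) = (t:ℝ)^k / k.factorial *
      ∑ r ∈ Finset.range t, (-1:ℝ)^r * (k.choose r) * (1 - (r:ℝ)/t)^k := by
  have htR : (0:ℝ) < t := by exact_mod_cast ht
  have step1 : gP k (t : ℝ)
      = (∑ j ∈ Finset.range t, (-1:ℝ)^j * (k.choose j) * ((t:ℝ) - j)^k) / k.factorial := by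
    unfold gP
    congr 1
    rw [← Finset.sum_subset (Finset.range_subset_range.mpr (by omega : t ≤ k + 1))
      (fun j _ hj => by
        have hjt : t ≤ j := by simpa using hj
        have : ((t:ℝ) - j) ≤ 0 := by
          have : (t:ℝ) ≤ j := by exact_mod_cast hjt
          linarith
        rw [max_eq_right this, zero_pow (by omega : k ≠ 0), mul_zero])]
    refine Finset.sum_congr rfl fun j hj => ?_
    have hjt : j < t := by simpa using hj
    have : (0:ℝ) ≤ (t:ℝ) - j := by
      have : (j:ℝ) ≤ t := by exact_mod_cast hjt.le
      linarith
    rw [max_eq_left this]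
  rw [step1]
  have step2 : ∀ j ∈ Finset.range t, (-1:ℝ)^j * (k.choose j) * ((t:ℝ) - j)^k
      = (t:ℝ)^k * ((-1:ℝ)^j * (k.choose j) * (1 - (j:ℝ)/t)^k) := by
    intro j _
    have heq : (t:ℝ) - j = t * (1 - (j:ℝ)/t) := by
      field_simp
    rw [heq, mul_pow]
    ring
  rw [Finset.sum_congr rfl step2, ← Finset.mul_sum]
  ring

/-- `vol(D ∩ B̃₁ᵗ(x)) = vol(D) · (tᵏ/k!) · ∑_{r=0}^{t-1} (-1)^r C(k,r) (1-r/t)^k`. -/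
theorem volume_box_inter_scaledL1Ball {k : ℕ} (hk : 1 ≤ k) (t : ℕ) (ht : 1 ≤ t) (htk : t ≤ k)
    (a b x : Fin k → ℝ) (hab : ∀ i, a i < b i) (hx : ∀ i, a i ≤ x i ∧ x i ≤ b i) :
    MeasureTheory.volume
        ({y : Fin k → ℝ | ∀ i, y i ∈ Set.Icc (a i) (b i)} ∩
          {y : Fin k → ℝ | ∑ i, deltaE a b x i y ≤ (t : ℝ≥0∞)}) =
      ENNReal.ofReal ((∏ i, (b i - a i)) * ((t : ℝ) ^ k / (Nat.factorial k)) *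
        ∑ r ∈ Finset.range t, (-1 : ℝ) ^ r * (Nat.choose k r) * (1 - (r : ℝ) / t) ^ k) := by
  have hsetEq : ({y : Fin k → ℝ | ∀ i, y i ∈ Set.Icc (a i) (b i)} ∩
      {y : Fin k → ℝ | ∑ i, deltaE a b x i y ≤ (t : ℝ≥0∞)})
      = {y : Fin k → ℝ | (∀ i, y i ∈ Icc (a i) (b i)) ∧
          ∑ i, tentF (a i) (b i) (x i) (y i) ≤ (t:ℝ)} := by
    ext y
    simp only [Set.mem_inter_iff, Set.mem_setOf_eq]
    apply and_congr_right
    intro hbox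
    have hterm : ∀ i ∈ Finset.univ, deltaE a b x i y
        = ENNReal.ofReal (tentF (a i) (b i) (x i) (y i)) :=
      fun i _ => deltaE_eq a b x i y (hab i) (hx i) (hbox i)
    have hnn : ∀ i ∈ Finset.univ, 0 ≤ tentF (a i) (b i) (x i) (y i) := fun i _ =>
      tentF_nonneg (hab i) (hx i).1 (hx i).2 (hbox i).1 (hbox i).2
    rw [Finset.sum_congr rfl hterm, ← ENNReal.ofReal_sum_of_nonneg hnn,
      show ((t:ℝ≥0∞)) = ENNReal.ofReal (t:ℝ) from (ENNReal.ofReal_natCast t).symm,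
      ENNReal.ofReal_le_ofReal_iff (by positivity)]
  have hprod : 0 ≤ ∏ i, (b i - a i) := Finset.prod_nonneg fun i _ => by linarith [hab i]
  rw [hsetEq, boxL k a b x hab hx (t:ℝ), (MM_eq_gP k hk (t:ℝ)).1, gP_nat k t hk ht htk,
    ← ENNReal.ofReal_mul hprod]
  congr 1
  ring
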